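/- Let n ≥ 1 be an integer. There exist a length m and an 8-divisible linear code over F_4 of effective length n if and only if n does not belong to the set {2,4,6,12,14,22} ∪ {1,3,5,7,9,11,13,15,17,19,23,25,27,33,35,43}; equivalently, if and only if n can be written as a non-negative integer combination of 8, 10, and 21. -/

import Mathlib

open Module Finset

noncomputable section
open scoped Classical

variable (F : Type) [Field F] [Fintype F]

instance finiteSubmodule (v : ℕ) : Finite (Submodule F (Fin v → F)) :=
  Finite.of_injective (fun s => (s : Set (Fin v → F))) SetLike.coe_injective

/-- The points of `PG(v-1,q)`: one-dimensional subspaces of `F_q^v`. -/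
abbrev PGPoint (v : ℕ) := {W : Submodule F (Fin v → F) // finrank F W = 1}

instance (v : ℕ) : Fintype (PGPoint F v) := Fintype.ofFinite _

/-- Cardinality of a multiset of points. -/
def mCard {v : ℕ} (M : PGPoint F v → ℕ) : ℕ := ∑ P, M P

/-- Multiplicity of a subspace: the sum of multiplicities over points contained in it. -/
def mVal {v : ℕ} (M : PGPoint F v → ℕ) (S : Submodule F (Fin v → F)) : ℕ :=
  ∑ P : PGPoint F v, if P.1 ≤ S then M P else 0

/-- A multiset of points is `Δ`-divisible if `#M ≡ M(H) (mod Δ)` for every hyperplane `H`. -/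
def IsDivisibleMultiset {v : ℕ} (Δ : ℕ) (M : PGPoint F v → ℕ) : Prop :=
  ∀ H : Submodule F (Fin v → F), finrank F H = v - 1 → mCard F M ≡ mVal F M H [MOD Δ]

/-- A set of points is `Δ`-divisible if `|S| ≡ |S ∩ H| (mod Δ)` for every hyperplane `H`. -/
def IsDivisibleSet {v : ℕ} (Δ : ℕ) (S : Set (PGPoint F v)) : Prop :=
  ∀ H : Submodule F (Fin v → F), finrank F H = v - 1 →
    S.ncard ≡ (S ∩ {P | P.1 ≤ H}).ncard [MOD Δ]

/-- A linear code `C ≤ F_q^m` is `Δ`-divisible if all Hamming weights are divisible by `Δ`. -/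
def IsDivisibleCode {m : ℕ} (Δ : ℕ) (C : Submodule F (Fin m → F)) : Prop :=
  ∀ c ∈ C, Δ ∣ hammingNorm c

/-- The effective length: the number of coordinates where some codeword is nonzero. -/
def effLength {m : ℕ} (C : Submodule F (Fin m → F)) : ℕ :=
  Nat.card {i : Fin m // ∃ c ∈ C, c i ≠ 0}

/-- `s_q(a,b,i)`, with `q = p^e`, written without division:
`s_q(a,b,0) = 1 + q + ⋯ + q^a` and `s_q(a,b,i) = p^{ie-b}·(1 + q + ⋯ + q^{a-i})` for `i ≥ 1`. -/
def sQ (p e a b i : ℕ) : ℕ :=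
  if i = 0 then ∑ j ∈ Finset.range (a + 1), (p ^ e) ^ j
  else p ^ (i * e - b) * ∑ j ∈ Finset.range (a - i + 1), (p ^ e) ^ j


set_option linter.unusedSectionVars false
section S18sec
variable {F}
namespace S18
variable {F : Type} [Field F] [Fintype F]

def wt {ι : Type} [Fintype ι] (c : ι → F) : ℕ := (univ.filter fun i => c i ≠ 0).card

lemma wt_eq_hammingNorm {m : ℕ} (c : Fin m → F) : wt c = hammingNorm c := rfl

@[simp] lemma wt_zero {ι : Type} [Fintype ι] : wt (0 : ι → F) = 0 := by
  simp [wt]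

lemma wt_eq_zero_iff {ι : Type} [Fintype ι] {c : ι → F} : wt c = 0 ↔ c = 0 := by
  simp [wt, Finset.filter_eq_empty_iff, funext_iff]

lemma wt_comp_equiv {ι κ : Type} [Fintype ι] [Fintype κ] (e : ι ≃ κ) (c : κ → F) :
    wt (c ∘ e) = wt c := by
  unfold wt
  apply Finset.card_bij (fun i _ => e i)
  · intro a ha; simpa using (by simpa using ha)
  · intro a _ b _ h; exact e.injective h
  · intro b hb; exact ⟨e.symm b, by simpa using (by simpa using hb), by simp⟩

lemma fiber_count {V : Type} [AddCommGroup V] [Module F V] [Fintype V]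
    (φ : V →ₗ[F] F) (hs : Function.Surjective φ) :
    Fintype.card F * (univ.filter fun v : V => φ v = 0).card = Fintype.card V := by
  classical
  have h := Finset.card_eq_sum_card_fiberwise (f := fun v : V => φ v)
    (s := univ) (t := univ) (fun v _ => mem_univ _)
  have hfib : ∀ t : F, (univ.filter fun v : V => φ v = t).card
      = (univ.filter fun v : V => φ v = 0).card := by
    intro t
    obtain ⟨v₀, hv₀⟩ := hs t
    apply Finset.card_bij (fun v _ => v - v₀)
    · intro a ha
      simp only [mem_filter, mem_univ, true_and] at ha ⊢
      simp [map_sub, ha, hv₀]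
    · intro a _ b _ h; exact sub_left_injective h
    · intro b hb
      simp only [mem_filter, mem_univ, true_and] at hb
      exact ⟨b + v₀, by simp [map_add, hb, hv₀], by simp⟩
  rw [← Finset.card_univ (α := V), h]
  simp only [hfib]
  rw [Finset.sum_const, Finset.card_univ, smul_eq_mul]

lemma count_ne (hF : Fintype.card F = 4) {V : Type} [AddCommGroup V] [Module F V] [Fintype V]
    (φ : V →ₗ[F] F) (hs : Function.Surjective φ) :
    4 * (univ.filter fun v : V => φ v ≠ 0).card = 3 * Fintype.card V := by
  have h := fiber_count φ hs
  rw [hF] at h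
  have hsplit := Finset.card_filter_add_card_filter_not
    (s := (univ : Finset V)) (p := fun v : V => φ v = 0)
  simp only [ne_eq, Finset.card_univ] at hsplit ⊢
  omega

/-- a nonzero linear functional to the base field is surjective -/
lemma surj_of_ne_zero {V : Type} [AddCommGroup V] [Module F V]
    (φ : V →ₗ[F] F) {v : V} (hv : φ v ≠ 0) : Function.Surjective φ := by
  intro t
  refine ⟨(t * (φ v)⁻¹) • v, ?_⟩
  rw [map_smul, smul_eq_mul, mul_assoc, inv_mul_cancel₀ hv, mul_one]

section Code
variable {ι : Type} [Fintype ι] (C : Submodule F (ι → F))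

/-- active coordinates -/
def actF : Finset ι := univ.filter fun i => ∃ c ∈ C, c i ≠ 0

lemma actCard_eq : Nat.card {i : ι // ∃ c ∈ C, c i ≠ 0} = (actF C).card := by
  rw [Nat.card_eq_fintype_card, Fintype.card_subtype]
  rfl

lemma supp_subset_act {c : ι → F} (hc : c ∈ C) :
    (univ.filter fun i => c i ≠ 0) ⊆ actF C := by
  intro i hi
  simp only [mem_filter, mem_univ, true_and] at hi
  exact mem_filter.2 ⟨mem_univ _, c, hc, hi⟩

lemma wt_le_act {c : ι → F} (hc : c ∈ C) : wt c ≤ (actF C).card :=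
  Finset.card_le_card (supp_subset_act C hc)

/-- first moment identity -/
lemma first_moment (hF : Fintype.card F = 4) [Fintype C] :
    4 * (∑ c : C, wt (c : ι → F)) = 3 * (actF C).card * Fintype.card C := by
  have hswap : (∑ c : C, wt (c : ι → F))
      = ∑ i : ι, (univ.filter fun c : C => (c : ι → F) i ≠ 0).card := by
    simp only [wt, Finset.card_filter]
    rw [Finset.sum_comm]
  rw [hswap, Finset.mul_sum]
  rw [← Finset.sum_filter_add_sum_filter_not (univ : Finset ι)
    (fun i => ∃ c ∈ C, c i ≠ 0)]
  have h2 : ∀ i ∈ (univ : Finset ι).filter (fun i => ¬ ∃ c ∈ C, c i ≠ 0),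
      4 * (univ.filter fun c : C => (c : ι → F) i ≠ 0).card = 0 := by
    intro i hi
    simp only [mem_filter, mem_univ, true_and] at hi
    push_neg at hi
    have : (univ.filter fun c : C => (c : ι → F) i ≠ 0) = ∅ := by
      apply Finset.filter_eq_empty_iff.2
      intro c _
      simpa using hi c c.2
    simp [this]
  rw [Finset.sum_congr rfl h2, Finset.sum_const, smul_zero, add_zero]
  have h1 : ∀ i ∈ (univ : Finset ι).filter (fun i => ∃ c ∈ C, c i ≠ 0),
      4 * (univ.filter fun c : C => (c : ι → F) i ≠ 0).card = 3 * Fintype.card C := by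
    intro i hi
    simp only [mem_filter, mem_univ, true_and] at hi
    obtain ⟨c, hcC, hci⟩ := hi
    exact count_ne hF ((LinearMap.proj i).comp C.subtype)
      (surj_of_ne_zero _ (v := ⟨c, hcC⟩) hci)
  rw [Finset.sum_congr rfl h1, Finset.sum_const, smul_eq_mul]
  show (actF C).card * (3 * Fintype.card C) = _
  ring

end Code
section Residual
variable {ι : Type} [Fintype ι] {C : Submodule F (ι → F)}

/-- the residual divisibility: for `c₀, d ∈ C`, the weight of `d` on the zero set of `c₀`
is even, provided `C` is `8`-divisible and `|F| = 4`. -/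
lemma residual_even (hF : Fintype.card F = 4)
    (hdiv : ∀ c ∈ C, 8 ∣ wt c) {c₀ d : ι → F} (hc₀ : c₀ ∈ C) (hd : d ∈ C) :
    2 ∣ (univ.filter fun i => c₀ i = 0 ∧ d i ≠ 0).card := by
  classical
  have key : (∑ l : F, wt (d + l • c₀))
      = 3 * wt c₀ + 4 * (univ.filter fun i => c₀ i = 0 ∧ d i ≠ 0).card := by
    have hswap : (∑ l : F, wt (d + l • c₀))
        = ∑ i : ι, (univ.filter fun l : F => d i + l * c₀ i ≠ 0).card := by
      simp only [wt, Finset.card_filter, Pi.add_apply, Pi.smul_apply, smul_eq_mul]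
      rw [Finset.sum_comm]
    rw [hswap]
    have hcoord : ∀ i : ι, (univ.filter fun l : F => d i + l * c₀ i ≠ 0).card
        = if c₀ i ≠ 0 then 3 else (if d i ≠ 0 then 4 else 0) := by
      intro i
      by_cases h0 : c₀ i ≠ 0
      · rw [if_pos h0]
        have : (univ.filter fun l : F => d i + l * c₀ i ≠ 0)
            = univ.erase (-(d i) / (c₀ i)) := by
          ext l
          simp only [mem_filter, mem_univ, true_and, mem_erase]
          constructor
          · intro h
            refine ⟨fun hl => h ?_, trivial⟩
            rw [hl]; field_simp; ring
          · rintro ⟨hl, -⟩ hcon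
            apply hl
            field_simp
            linear_combination hcon
        rw [this, Finset.card_erase_of_mem (mem_univ _), Finset.card_univ, hF]
      · rw [if_neg h0]
        push_neg at h0
        by_cases hdi : d i ≠ 0
        · rw [if_pos hdi]
          have : (univ.filter fun l : F => d i + l * c₀ i ≠ 0) = univ := by
            apply Finset.filter_true_of_mem
            intro l _
            simpa [h0] using hdi
          rw [this, Finset.card_univ, hF]
        · rw [if_neg hdi]
          push_neg at hdi
          simp [h0, hdi]
    rw [Finset.sum_congr rfl (fun i _ => hcoord i)]
    rw [Finset.sum_ite, Finset.sum_const, Finset.sum_ite, Finset.sum_const,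
      Finset.sum_const, smul_eq_mul, smul_eq_mul, smul_eq_mul]
    have e1 : (univ.filter fun i : ι => c₀ i ≠ 0).card = wt c₀ := rfl
    have e2 : ((univ.filter fun i : ι => ¬ c₀ i ≠ 0).filter fun i => d i ≠ 0)
        = univ.filter fun i => c₀ i = 0 ∧ d i ≠ 0 := by
      rw [Finset.filter_filter]
      apply Finset.filter_congr
      intro i _
      simp only [ne_eq, not_not]
    rw [e2]
    have e3 : ((univ.filter fun i : ι => ¬ c₀ i ≠ 0).filter fun i => ¬ d i ≠ 0).card * 0 = 0 :=
      mul_zero _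
    rw [e3, add_zero, e1]
    ring
  have hdvd : (8 : ℕ) ∣ (∑ l : F, wt (d + l • c₀)) := by
    apply Finset.dvd_sum
    intro l _
    exact hdiv _ (C.add_mem hd (C.smul_mem l hc₀))
  rw [key] at hdvd
  have h8 : (8 : ℕ) ∣ wt c₀ := hdiv _ hc₀
  omega

lemma no_res1 (hF : Fintype.card F = 4)
    (hdiv : ∀ c ∈ C, 8 ∣ wt c) {c₀ : ι → F} (hc₀ : c₀ ∈ C)
    (hw : wt c₀ + 1 = (actF C).card) : False := by
  classical
  -- B = active \ supp c₀ has card 1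
  set B : Finset ι := (actF C) \ (univ.filter fun i => c₀ i ≠ 0) with hB
  have hsub := supp_subset_act C hc₀
  have hBcard : B.card = 1 := by
    rw [hB, Finset.card_sdiff_of_subset hsub]
    have : (univ.filter fun i => c₀ i ≠ 0).card = wt c₀ := rfl
    omega
  obtain ⟨i₀, hi₀⟩ := Finset.card_eq_one.1 hBcard
  have hi₀B : i₀ ∈ B := by rw [hi₀]; exact mem_singleton_self _
  have hi₀act : i₀ ∈ actF C := (Finset.mem_sdiff.1 hi₀B).1
  have hi₀nsupp : c₀ i₀ = 0 := by
    have := (Finset.mem_sdiff.1 hi₀B).2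
    simpa using this
  obtain ⟨d, hdC, hdi₀⟩ := (mem_filter.1 hi₀act).2
  have heven := residual_even hF hdiv hc₀ hdC
  have hXsub : (univ.filter fun i => c₀ i = 0 ∧ d i ≠ 0) ⊆ B := by
    intro i hi
    simp only [mem_filter, mem_univ, true_and] at hi
    rw [hB, Finset.mem_sdiff]
    refine ⟨mem_filter.2 ⟨mem_univ _, d, hdC, hi.2⟩, by simp [hi.1]⟩
  have hXmem : i₀ ∈ (univ.filter fun i => c₀ i = 0 ∧ d i ≠ 0) :=
    mem_filter.2 ⟨mem_univ _, hi₀nsupp, hdi₀⟩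
  have h1 : 1 ≤ (univ.filter fun i => c₀ i = 0 ∧ d i ≠ 0).card :=
    Finset.card_pos.2 ⟨i₀, hXmem⟩
  have h2 : (univ.filter fun i => c₀ i = 0 ∧ d i ≠ 0).card ≤ 1 := by
    rw [← hBcard]; exact Finset.card_le_card hXsub
  omega

lemma sum_wt_le [Fintype C] {W : ℕ}
    (h : ∀ c : C, (c : ι → F) ≠ 0 → wt (c : ι → F) ≤ W) :
    ∑ c : C, wt (c : ι → F) ≤ W * (Fintype.card C - 1) := by
  classical
  rw [← Finset.sum_erase_add (univ : Finset C) _ (mem_univ (0 : C))]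
  have : wt ((0 : C) : ι → F) = 0 := by simp
  rw [this, add_zero]
  calc ∑ c ∈ (univ : Finset C).erase 0, wt (c : ι → F)
      ≤ ((univ : Finset C).erase 0).card * W := by
        apply Finset.sum_le_card_nsmul
        intro c hc
        exact h c (by simpa [Submodule.coe_eq_zero] using Finset.ne_of_mem_erase hc)
    _ = W * (Fintype.card C - 1) := by
        rw [Finset.card_erase_of_mem (mem_univ _), Finset.card_univ, mul_comm]

lemma sum_wt_ge [Fintype C] {W : ℕ}
    (h : ∀ c : C, (c : ι → F) ≠ 0 → W ≤ wt (c : ι → F)) :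
    W * (Fintype.card C - 1) ≤ ∑ c : C, wt (c : ι → F) := by
  classical
  rw [← Finset.sum_erase_add (univ : Finset C) _ (mem_univ (0 : C))]
  have : wt ((0 : C) : ι → F) = 0 := by simp
  rw [this, add_zero]
  calc W * (Fintype.card C - 1)
      = ((univ : Finset C).erase 0).card * W := by
        rw [Finset.card_erase_of_mem (mem_univ _), Finset.card_univ, mul_comm]
    _ ≤ ∑ c ∈ (univ : Finset C).erase 0, wt (c : ι → F) := by
        apply Finset.card_nsmul_le_sum
        intro c hc
        exact h c (by simpa [Submodule.coe_eq_zero] using Finset.ne_of_mem_erase hc)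

/-- restriction-to-`B` linear map -/
def resMap (B : Finset ι) : (ι → F) →ₗ[F] (ι → F) where
  toFun f := fun i => if i ∈ B then f i else 0
  map_add' f g := by
    funext i
    by_cases h : i ∈ B <;> simp [h]
  map_smul' t f := by
    funext i
    by_cases h : i ∈ B <;> simp [h]

lemma no_res3 (hF : Fintype.card F = 4)
    (hdiv : ∀ c ∈ C, 8 ∣ wt c) {c₀ : ι → F} (hc₀ : c₀ ∈ C)
    (hw : wt c₀ + 3 = (actF C).card) : False := by
  classical
  set B : Finset ι := (actF C) \ (univ.filter fun i => c₀ i ≠ 0) with hB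
  have hsub := supp_subset_act C hc₀
  have hBcard : B.card = 3 := by
    rw [hB, Finset.card_sdiff_of_subset hsub]
    have : (univ.filter fun i => c₀ i ≠ 0).card = wt c₀ := rfl
    omega
  have hmemB : ∀ i, i ∈ B ↔ (i ∈ actF C ∧ c₀ i = 0) := by
    intro i
    rw [hB, Finset.mem_sdiff]
    simp only [mem_filter, mem_univ, true_and, not_not]
  set C' : Submodule F (ι → F) := C.map (resMap B) with hC'
  letI : Fintype C' := Fintype.ofFinite _
  -- weights on C'
  have hwt' : ∀ c' ∈ C', 2 ∣ wt c' ∧ wt c' ≤ 3 := by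
    rintro c' ⟨d, hdC, rfl⟩
    have hfe : (univ.filter fun i => (resMap B d : ι → F) i ≠ 0)
        = univ.filter fun i => c₀ i = 0 ∧ d i ≠ 0 := by
      apply Finset.filter_congr
      intro i _
      show (if i ∈ B then d i else 0) ≠ 0 ↔ _
      by_cases hiB : i ∈ B
      · simp only [if_pos hiB]
        have := (hmemB i).1 hiB
        tauto
      · simp only [if_neg hiB, ne_eq, not_true_eq_false]
        constructor
        · intro h; exact h.elim
        · rintro ⟨h1, h2⟩
          exact absurd ((hmemB i).2 ⟨mem_filter.2 ⟨mem_univ _, d, hdC, h2⟩, h1⟩) hiB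
    constructor
    · show 2 ∣ wt (resMap B d : ι → F)
      unfold wt
      rw [hfe]
      exact residual_even hF hdiv hc₀ hdC
    · show wt (resMap B d : ι → F) ≤ 3
      unfold wt
      rw [hfe]
      rw [← hBcard]
      apply Finset.card_le_card
      intro i hi
      simp only [mem_filter, mem_univ, true_and] at hi
      exact (hmemB i).2 ⟨mem_filter.2 ⟨mem_univ _, d, hdC, hi.2⟩, hi.1⟩
  -- active set of C' is B
  have hact' : actF C' = B := by
    ext i
    simp only [actF, mem_filter, mem_univ, true_and]
    constructor
    · rintro ⟨c', ⟨d, hdC, rfl⟩, hne⟩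
      by_contra hiB
      exact hne (by show (if i ∈ B then d i else 0) = 0; rw [if_neg hiB])
    · intro hiB
      obtain ⟨hiact, -⟩ := (hmemB i).1 hiB
      obtain ⟨d, hdC, hdi⟩ := (mem_filter.1 hiact).2
      refine ⟨resMap B d, ⟨d, hdC, rfl⟩, ?_⟩
      show (if i ∈ B then d i else 0) ≠ 0
      rw [if_pos hiB]; exact hdi
  have hFM := first_moment C' hF
  rw [hact', hBcard] at hFM
  have hle : ∑ c : C', wt (c : ι → F) ≤ 2 * (Fintype.card C' - 1) :=
    sum_wt_le (fun c hc => by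
      obtain ⟨h2, h3⟩ := hwt' c c.2
      have : wt (c : ι → F) ≠ 0 := fun h => hc (wt_eq_zero_iff.1 h)
      omega)
  have hge : 2 * (Fintype.card C' - 1) ≤ ∑ c : C', wt (c : ι → F) :=
    sum_wt_ge (fun c hc => by
      obtain ⟨h2, h3⟩ := hwt' c c.2
      have : wt (c : ι → F) ≠ 0 := fun h => hc (wt_eq_zero_iff.1 h)
      omega)
  have hN : 1 ≤ Fintype.card C' := Fintype.card_pos
  omega

set_option maxHeartbeats 2000000 in
lemma not_bad (hF : Fintype.card F = 4)
    (hdiv : ∀ c ∈ C, 8 ∣ wt c)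
    (hbad : (actF C).card = 2 ∨ (actF C).card = 4 ∨ (actF C).card = 6 ∨ (actF C).card = 12 ∨ (actF C).card = 14 ∨ (actF C).card = 22 ∨ (actF C).card = 1 ∨ (actF C).card = 3 ∨ (actF C).card = 5 ∨ (actF C).card = 7 ∨ (actF C).card = 9 ∨ (actF C).card = 11 ∨ (actF C).card = 13 ∨ (actF C).card = 15 ∨ (actF C).card = 17 ∨ (actF C).card = 19 ∨ (actF C).card = 23 ∨ (actF C).card = 25 ∨ (actF C).card = 27 ∨ (actF C).card = 33 ∨ (actF C).card = 35 ∨ (actF C).card = 43) : False := by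
  classical
  letI : Fintype C := Fintype.ofFinite _
  set n := (actF C).card with hn
  set N := Fintype.card C with hN
  set S := ∑ c : C, wt (c : ι → F) with hS
  have hNpos : 1 ≤ N := Fintype.card_pos
  have hFM : 4 * S = 3 * n * N := first_moment C hF
  have hn1 : 1 ≤ n := by omega
  obtain ⟨i₀, hi₀⟩ := Finset.card_pos.1 hn1
  obtain ⟨c₁, hc₁C, hc₁i⟩ := (mem_filter.1 hi₀).2
  have h8n : 8 ≤ n := by
    have h1 : 8 ∣ wt c₁ := hdiv _ hc₁C
    have h2 : wt c₁ ≤ n := wt_le_act C hc₁C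
    have h3 : wt c₁ ≠ 0 := by
      intro h
      exact hc₁i (congrFun (wt_eq_zero_iff.1 h) i₀)
    omega
  have hprop : ∀ c : C, (c : ι → F) ≠ 0 →
      8 ∣ wt (c : ι → F) ∧ 8 ≤ wt (c : ι → F) ∧ wt (c : ι → F) ≤ n ∧
      wt (c : ι → F) + 1 ≠ n ∧ wt (c : ι → F) + 3 ≠ n := by
    intro c hc
    have h1 : 8 ∣ wt (c : ι → F) := hdiv _ c.2
    have h0 : wt (c : ι → F) ≠ 0 := fun h => hc (wt_eq_zero_iff.1 h)
    exact ⟨h1, by omega, wt_le_act C c.2,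
      fun h => no_res1 hF hdiv c.2 h, fun h => no_res3 hF hdiv c.2 h⟩
  have hlow : 8 * (N - 1) ≤ S := sum_wt_ge (fun c hc => (hprop c hc).2.1)
  have hup : ∀ W : ℕ, (∀ w, 8 ∣ w → 8 ≤ w → w ≤ n → w + 1 ≠ n → w + 3 ≠ n → w ≤ W) →
      S ≤ W * (N - 1) := by
    intro W hW
    exact sum_wt_le (fun c hc => by
      obtain ⟨a1, a2, a3, a4, a5⟩ := hprop c hc
      exact hW _ a1 a2 a3 a4 a5)
  rcases hbad with h|h|h|h|h|h|h|h|h|h|h|h|h|h|h|h|h|h|h|h|h|h <;>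
  rw [h] at hFM <;>
  first
  | omega
  | (have := hup 8 (by intro w b1 b2 b3 b4 b5; omega); omega)
  | (have := hup 16 (by intro w b1 b2 b3 b4 b5; omega); omega)
  | (have := hup 24 (by intro w b1 b2 b3 b4 b5; omega); omega)
  | (have := hup 32 (by intro w b1 b2 b3 b4 b5; omega); omega)

end Residual

/-! ### Constructions -/

section Constr
variable {F : Type} [Field F] [Fintype F]

/-- helper: filter on a subtype -/
lemma filter_subtype_card {α : Type} [Fintype α] (P Q : α → Prop) :
    (univ.filter fun i : {v : α // P v} => Q i.1).card
      = (univ.filter fun v : α => P v ∧ Q v).card := by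
  classical
  apply Finset.card_bij (fun i _ => i.1)
  · intro a ha
    simp only [mem_filter, mem_univ, true_and] at ha ⊢
    exact ⟨a.2, ha⟩
  · intro a _ b _ h; exact Subtype.ext h
  · intro b hb
    simp only [mem_filter, mem_univ, true_and] at hb
    exact ⟨⟨b, hb.1⟩, by simpa using hb.2, rfl⟩

/-- generator map from columns -/
def gen {k : ℕ} {ι : Type} (g : ι → (Fin k → F)) : (Fin k → F) →ₗ[F] (ι → F) where
  toFun x := fun v => ∑ j, g v j * x j
  map_add' x y := by
    funext v
    simp [mul_add, Finset.sum_add_distrib]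
  map_smul' t x := by
    funext v
    simp [Finset.mul_sum, mul_left_comm]

lemma wt_gen {k : ℕ} {ι : Type} [Fintype ι] (g : ι → (Fin k → F)) (x : Fin k → F) :
    wt (gen g x) = (univ.filter fun v : ι => ∑ j, g v j * x j ≠ 0).card := rfl

lemma act_gen {k : ℕ} {ι : Type} [Fintype ι] (g : ι → (Fin k → F)) (hg : ∀ v, g v ≠ 0) :
    actF (LinearMap.range (gen g)) = univ := by
  classical
  apply Finset.eq_univ_of_forall
  intro v
  have : ∃ j, g v j ≠ 0 := by
    by_contra h
    push_neg at h
    exact hg v (funext h)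
  obtain ⟨j, hj⟩ := this
  refine mem_filter.2 ⟨mem_univ _, gen g (Pi.single j (g v j)⁻¹), LinearMap.mem_range_self _ _, ?_⟩
  show (∑ j', g v j' * (Pi.single j (g v j)⁻¹ : Fin k → F) j') ≠ 0
  rw [Finset.sum_eq_single j]
  · rw [Pi.single_eq_same, mul_inv_cancel₀ hj]
    exact one_ne_zero
  · intro b _ hb
    rw [Pi.single_eq_of_ne hb, mul_zero]
  · intro h; exact absurd (mem_univ j) h

/-- the leading coefficient of a vector -/
def lead : ∀ {k : ℕ}, (Fin k → F) → F
  | 0, _ => 0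
  | _ + 1, v => if v 0 ≠ 0 then v 0 else lead (fun j => v j.succ)

lemma lead_ne_zero : ∀ {k : ℕ} (v : Fin k → F), v ≠ 0 → lead v ≠ 0 := by
  intro k
  induction k with
  | zero => intro v hv; exact absurd (funext fun i => i.elim0) hv
  | succ k ih =>
    intro v hv
    show (if v 0 ≠ 0 then v 0 else lead (fun j => v j.succ)) ≠ 0
    by_cases h0 : v 0 ≠ 0
    · rwa [if_pos h0]
    · rw [if_neg h0]
      push_neg at h0
      apply ih
      intro htail
      apply hv
      funext i
      refine Fin.cases h0 (fun j => ?_) i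
      exact congrFun htail j

lemma lead_smul : ∀ {k : ℕ} (t : F), t ≠ 0 → ∀ (v : Fin k → F), lead (t • v) = t * lead v := by
  intro k
  induction k with
  | zero => intro t _ v; show (0 : F) = t * 0; rw [mul_zero]
  | succ k ih =>
    intro t ht v
    show (if t * v 0 ≠ 0 then t * v 0 else lead (fun j => t * v j.succ))
      = t * (if v 0 ≠ 0 then v 0 else lead (fun j => v j.succ))
    by_cases h0 : v 0 ≠ 0
    · rw [if_pos (mul_ne_zero ht h0), if_pos h0]
    · push_neg at h0
      rw [if_neg (by simp [h0]), if_neg (by simp [h0])]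
      have := ih t ht (fun j => v j.succ)
      exact this

/-- class counting by scaling: for `t ≠ 0` the class with lead `t` bijects
with the class with lead `1`. -/
lemma lead_class_card {k : ℕ} (x : Fin k → F) {t : F} (ht : t ≠ 0) :
    (univ.filter fun v : Fin k → F =>
        (v ≠ 0 ∧ (∑ j, v j * x j) = 0) ∧ lead v = t).card
      = (univ.filter fun v : Fin k → F =>
        (v ≠ 0 ∧ (∑ j, v j * x j) = 0) ∧ lead v = 1).card := by
  classical
  apply Finset.card_bij (fun v _ => t⁻¹ • v)
  · intro v hv
    simp only [mem_filter, mem_univ, true_and] at hv ⊢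
    obtain ⟨⟨hv0, hdot⟩, hlead⟩ := hv
    refine ⟨⟨?_, ?_⟩, ?_⟩
    · exact fun h => hv0 (by simpa [ht] using congrArg (t • ·) h)
    · simp only [Pi.smul_apply, smul_eq_mul, mul_assoc, ← Finset.mul_sum, hdot, mul_zero]
    · rw [lead_smul t⁻¹ (inv_ne_zero ht) v, hlead, inv_mul_cancel₀ ht]
  · intro a _ b _ h
    have := congrArg (t • ·) h
    simpa [smul_smul, mul_inv_cancel₀ ht] using this
  · intro w hw
    simp only [mem_filter, mem_univ, true_and] at hw
    obtain ⟨⟨hw0, hdot⟩, hlead⟩ := hw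
    refine ⟨t • w, ?_, by simp [smul_smul, inv_mul_cancel₀ ht]⟩
    simp only [mem_filter, mem_univ, true_and]
    refine ⟨⟨?_, ?_⟩, ?_⟩
    · exact fun h => hw0 (by simpa [ht] using congrArg (t⁻¹ • ·) h)
    · simp only [Pi.smul_apply, smul_eq_mul, mul_assoc, ← Finset.mul_sum, hdot, mul_zero]
    · rw [lead_smul t ht w, hlead, mul_one]

/-- main counting lemma -/
lemma count_lead (hF : Fintype.card F = 4) {k : ℕ} (x : Fin k → F) (T : Finset F)
    (hT : (0 : F) ∉ T) :
    3 * (univ.filter fun v : Fin k → F =>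
        (v ≠ 0 ∧ lead v ∈ T) ∧ (∑ j, v j * x j) = 0).card
      = T.card * ((univ.filter fun v : Fin k → F => (∑ j, v j * x j) = 0).card - 1) := by
  classical
  set D1 := (univ.filter fun v : Fin k → F =>
      (v ≠ 0 ∧ (∑ j, v j * x j) = 0) ∧ lead v = 1).card with hD1
  -- the T-class
  have hTcard : (univ.filter fun v : Fin k → F =>
      (v ≠ 0 ∧ lead v ∈ T) ∧ (∑ j, v j * x j) = 0).card = T.card * D1 := by
    have hre : (univ.filter fun v : Fin k → F =>
        (v ≠ 0 ∧ lead v ∈ T) ∧ (∑ j, v j * x j) = 0)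
        = (univ.filter fun v : Fin k → F =>
        (v ≠ 0 ∧ (∑ j, v j * x j) = 0)).filter (fun v => lead v ∈ T) := by
      rw [Finset.filter_filter]
      apply Finset.filter_congr
      intro v _
      tauto
    rw [hre]
    rw [Finset.card_eq_sum_card_fiberwise (f := lead) (t := T)
      (fun v hv => Finset.mem_coe.2 (Finset.mem_filter.1 (Finset.mem_coe.1 hv)).2)]
    have : ∀ t ∈ T, (((univ.filter fun v : Fin k → F =>
        (v ≠ 0 ∧ (∑ j, v j * x j) = 0)).filter (fun v => lead v ∈ T)).filter
        (fun v => lead v = t)).card = D1 := by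
      intro t htT
      have htne : t ≠ 0 := fun h => hT (h ▸ htT)
      rw [hD1, ← lead_class_card x htne]
      congr 1
      rw [Finset.filter_filter, Finset.filter_filter]
      apply Finset.filter_congr
      intro v _
      constructor
      · rintro ⟨h1, ⟨-, h3⟩⟩; exact ⟨h1, h3⟩
      · rintro ⟨h1, h3⟩; exact ⟨h1, h3 ▸ htT, h3⟩
    rw [Finset.sum_congr rfl this, Finset.sum_const, smul_eq_mul]
  -- the full class
  have hfull : (univ.filter fun v : Fin k → F =>
      (v ≠ 0 ∧ (∑ j, v j * x j) = 0)).card = 3 * D1 := by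
    rw [Finset.card_eq_sum_card_fiberwise (f := lead) (t := (univ : Finset F).erase 0)
      (fun v hv => by
        simp only [Finset.mem_coe, mem_filter, mem_univ, true_and] at hv
        exact Finset.mem_erase.2 ⟨lead_ne_zero v hv.1, mem_univ _⟩)]
    have : ∀ t ∈ (univ : Finset F).erase 0, ((univ.filter fun v : Fin k → F =>
        (v ≠ 0 ∧ (∑ j, v j * x j) = 0)).filter (fun v => lead v = t)).card = D1 := by
      intro t ht
      have htne : t ≠ 0 := Finset.ne_of_mem_erase ht
      rw [hD1, ← lead_class_card x htne]
      congr 1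
      rw [Finset.filter_filter]
    rw [Finset.sum_congr rfl this, Finset.sum_const, smul_eq_mul,
      Finset.card_erase_of_mem (mem_univ _), Finset.card_univ, hF]
  -- relate full class to Z minus one
  have hZ : (univ.filter fun v : Fin k → F => (∑ j, v j * x j) = 0).card
      = (univ.filter fun v : Fin k → F => (v ≠ 0 ∧ (∑ j, v j * x j) = 0)).card + 1 := by
    have h0mem : (0 : Fin k → F) ∈ univ.filter fun v : Fin k → F => (∑ j, v j * x j) = 0 := by
      simp
    have herase : (univ.filter fun v : Fin k → F => (∑ j, v j * x j) = 0).erase 0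
        = univ.filter fun v : Fin k → F => (v ≠ 0 ∧ (∑ j, v j * x j) = 0) := by
      ext v
      simp only [Finset.mem_erase, mem_filter, mem_univ, true_and]
      try tauto
    rw [← Finset.card_erase_add_one h0mem, herase]
  rw [hTcard, hZ, hfull]
  simp only [Nat.add_sub_cancel]
  ring

/-- cardinality of the zero set of the dot functional -/
lemma card_zeroset (hF : Fintype.card F = 4) {k : ℕ} (x : Fin k → F) (hx : x ≠ 0) :
    4 * (univ.filter fun v : Fin k → F => (∑ j, v j * x j) = 0).card = 4 ^ k := by
  classical
  have hφ : ∃ φ : (Fin k → F) →ₗ[F] F, ∀ v, φ v = ∑ j, v j * x j := by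
    refine ⟨{ toFun := fun v => ∑ j, v j * x j, map_add' := ?_, map_smul' := ?_ }, fun _ => rfl⟩
    · intro v w; simp [add_mul, Finset.sum_add_distrib]
    · intro t v; simp [Finset.mul_sum, mul_assoc]
  obtain ⟨φ, hφeq⟩ := hφ
  obtain ⟨j, hj⟩ : ∃ j, x j ≠ 0 := by
    by_contra h
    push_neg at h
    exact hx (funext h)
  have hsurj : Function.Surjective φ := by
    apply surj_of_ne_zero (v := Pi.single j 1)
    rw [hφeq]
    rw [Finset.sum_eq_single j]
    · simp [hj]
    · intro b _ hb; rw [Pi.single_eq_of_ne hb, zero_mul]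
    · intro h; exact absurd (mem_univ j) h
  have := fiber_count φ hsurj
  rw [hF] at this
  have hcard : Fintype.card (Fin k → F) = 4 ^ k := by
    rw [Fintype.card_fun, hF, Fintype.card_fin]
  rw [← hcard]
  rw [← this]
  congr 2
  apply Finset.filter_congr
  intro v _
  rw [hφeq]

/-- abstract existence predicate over an arbitrary finite index type -/
def GoodI (F : Type) [Field F] [Fintype F] (n : ℕ) : Prop :=
  ∃ (ι : Type) (_ : Fintype ι) (C : Submodule F (ι → F)),
    (∀ c ∈ C, 8 ∣ wt c) ∧ (actF C).card = n

lemma base_card (hF : Fintype.card F = 4) {k : ℕ} (T : Finset F) (hT : (0 : F) ∉ T) :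
    3 * (univ.filter fun v : Fin k → F => v ≠ 0 ∧ lead v ∈ T).card = T.card * (4 ^ k - 1) := by
  have h := count_lead hF (x := (0 : Fin k → F)) T hT
  have h1 : (univ.filter fun v : Fin k → F =>
      (v ≠ 0 ∧ lead v ∈ T) ∧ (∑ j, v j * (0 : Fin k → F) j) = 0)
      = univ.filter fun v : Fin k → F => v ≠ 0 ∧ lead v ∈ T := by
    apply Finset.filter_congr
    intro v _
    simp
  have h2 : (univ.filter fun v : Fin k → F => (∑ j, v j * (0 : Fin k → F) j) = 0)
      = (univ : Finset (Fin k → F)) := by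
    apply Finset.filter_true_of_mem
    intro v _
    simp
  rw [h1, h2, Finset.card_univ, Fintype.card_fun, hF, Fintype.card_fin] at h
  exact h

/-- the two base codes, combined statement -/
lemma goodI_base (hF : Fintype.card F = 4) {k : ℕ} (hk : 1 ≤ k) (T : Finset F)
    (hT : (0 : F) ∉ T) (nn z : ℕ)
    (hnn : 3 * nn = T.card * (4 ^ k - 1))
    (hz : 3 * z = T.card * (4 ^ (k - 1) - 1))
    (hdiv8 : 8 ∣ nn - z) :
    GoodI F nn := by
  classical
  refine ⟨{v : Fin k → F // v ≠ 0 ∧ lead v ∈ T}, inferInstance,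
    LinearMap.range (gen (Subtype.val)), ?_, ?_⟩
  · -- divisibility
    rintro c ⟨x, rfl⟩
    by_cases hx : x = 0
    · rw [hx, map_zero, wt_zero]
      exact dvd_zero 8
    · -- weight is nn - z
      have h4 : (4 : ℕ) ^ k = 4 * 4 ^ (k - 1) := by
        conv_lhs => rw [show k = (k - 1) + 1 by omega]
        ring
      set p1 : ℕ := 4 ^ k with hp1
      set p0 : ℕ := 4 ^ (k - 1) with hp0
      have hZk := card_zeroset hF x hx
      rw [← hp1] at hZk
      have hcount := count_lead hF x T hT
      have hcardi : Fintype.card {v : Fin k → F // v ≠ 0 ∧ lead v ∈ T} = nn := by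
        rw [Fintype.card_subtype]
        have hb := base_card hF (k := k) T hT
        rw [← hp1] at hb
        exact Nat.eq_of_mul_eq_mul_left (by norm_num) (hb.trans hnn.symm)
      have heq : (univ.filter fun i : {v : Fin k → F // v ≠ 0 ∧ lead v ∈ T} =>
          (∑ j, (i : Fin k → F) j * x j) = 0).card
          = (univ.filter fun v : Fin k → F =>
          (v ≠ 0 ∧ lead v ∈ T) ∧ (∑ j, v j * x j) = 0).card := by
        apply Finset.card_bij (fun i _ => i.1)
        · intro a ha
          simp only [mem_filter, mem_univ, true_and] at ha ⊢
          exact ⟨a.2, ha⟩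
        · intro a _ b _ h; exact Subtype.ext h
        · intro b hb
          simp only [mem_filter, mem_univ, true_and] at hb
          exact ⟨⟨b, hb.1⟩, by simpa using hb.2, rfl⟩
      have hzval : (univ.filter fun i : {v : Fin k → F // v ≠ 0 ∧ lead v ∈ T} =>
          (∑ j, (i : Fin k → F) j * x j) = 0).card = z := by
        have hZpow : (univ.filter fun v : Fin k → F => (∑ j, v j * x j) = 0).card
            = p0 := by
          apply Nat.eq_of_mul_eq_mul_left (show 0 < 4 by norm_num)
          rw [hZk, h4]
        rw [hZpow] at hcount
        exact heq.trans
          (Nat.eq_of_mul_eq_mul_left (by norm_num) (hcount.trans hz.symm))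
      have hsplit := Finset.card_filter_add_card_filter_not
        (s := (univ : Finset {v : Fin k → F // v ≠ 0 ∧ lead v ∈ T}))
        (p := fun i : {v : Fin k → F // v ≠ 0 ∧ lead v ∈ T} =>
          (∑ j, (i : Fin k → F) j * x j) = 0)
      rw [Finset.card_univ, hcardi, hzval] at hsplit
      have hwt : wt (gen (Subtype.val :
          {v : Fin k → F // v ≠ 0 ∧ lead v ∈ T} → (Fin k → F)) x) = nn - z := by
        rw [wt_gen]
        have hne : (univ.filter fun i : {v : Fin k → F // v ≠ 0 ∧ lead v ∈ T} =>
            (∑ j, (i : Fin k → F) j * x j) ≠ 0).card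
            = (univ.filter fun i : {v : Fin k → F // v ≠ 0 ∧ lead v ∈ T} =>
            ¬ ((∑ j, (i : Fin k → F) j * x j) = 0)).card := rfl
        rw [hne]
        exact Nat.eq_sub_of_add_eq' hsplit
      rw [hwt]
      exact hdiv8
  · -- effective length
    rw [act_gen _ (fun v => v.2.1), Finset.card_univ, Fintype.card_subtype]
    have hb := base_card hF (k := k) T hT
    exact Nat.eq_of_mul_eq_mul_left (by norm_num) (hb.trans hnn.symm)

lemma goodI_21 (hF : Fintype.card F = 4) : GoodI F 21 := by
  refine goodI_base hF (k := 3) (by norm_num) {1} (by simp) 21 5 ?_ ?_ ?_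
  · rw [Finset.card_singleton]; norm_num
  · rw [Finset.card_singleton]; norm_num
  · norm_num

lemma goodI_10 (hF : Fintype.card F = 4) : GoodI F 10 := by
  -- get an element a ∉ {0, 1}
  obtain ⟨a, ha0, ha1⟩ : ∃ a : F, a ≠ 0 ∧ a ≠ 1 := by
    by_contra h
    push_neg at h
    have hsub : (univ : Finset F) ⊆ {0, 1} := by
      intro b _
      rcases eq_or_ne b 0 with hb | hb
      · simp [hb]
      · simp [h b hb]
    have := Finset.card_le_card hsub
    rw [Finset.card_univ, hF] at this
    have h2 : ({0, 1} : Finset F).card ≤ 2 := Finset.card_insert_le _ _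
    omega
  have hTcard : ({1, a} : Finset F).card = 2 := by
    rw [Finset.card_insert_of_notMem (by
      intro h
      exact ha1 (Finset.mem_singleton.1 h).symm), Finset.card_singleton]
  refine goodI_base hF (k := 2) (by norm_num) {1, a} ?_ 10 2 ?_ ?_ ?_
  · intro h
    rcases Finset.mem_insert.1 h with h | h
    · exact one_ne_zero h.symm
    · exact ha0 (Finset.mem_singleton.1 h).symm
  · rw [hTcard]; norm_num
  · rw [hTcard]; norm_num
  · norm_num

lemma goodI_8 (hF : Fintype.card F = 4) : GoodI F 8 := by
  classical
  refine ⟨Fin 8, inferInstance, LinearMap.range (gen (fun _ : Fin 8 => (fun _ : Fin 1 => (1 : F)))), ?_, ?_⟩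
  · rintro c ⟨x, rfl⟩
    by_cases hx : x = 0
    · rw [hx, map_zero, wt_zero]
      exact dvd_zero 8
    · have hx0 : x 0 ≠ 0 := by
        intro h
        apply hx
        funext j
        rw [Fin.eq_zero j]; exact h
      have : wt (gen (fun _ : Fin 8 => (fun _ : Fin 1 => (1 : F))) x) = 8 := by
        rw [wt_gen]
        have : (univ.filter fun v : Fin 8 => (∑ j : Fin 1, (1 : F) * x j) ≠ 0)
            = univ := by
          apply Finset.filter_true_of_mem
          intro i _
          simpa using hx0
        rw [this, Finset.card_univ, Fintype.card_fin]
      rw [this]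
  · rw [act_gen _ (fun v => by
      intro h
      have := congrFun h 0
      simp at this), Finset.card_univ, Fintype.card_fin]

/-- direct sums -/
lemma wt_sum {ι₁ ι₂ : Type} [Fintype ι₁] [Fintype ι₂] (c : ι₁ ⊕ ι₂ → F) :
    wt c = wt (c ∘ Sum.inl) + wt (c ∘ Sum.inr) := by
  classical
  simp only [wt, Finset.card_filter]
  rw [Fintype.sum_sum_type]
  rfl

lemma goodI_add {n₁ n₂ : ℕ} (h₁ : GoodI F n₁) (h₂ : GoodI F n₂) : GoodI F (n₁ + n₂) := by
  classical
  obtain ⟨ι₁, _, C₁, hdiv₁, hact₁⟩ := h₁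
  obtain ⟨ι₂, _, C₂, hdiv₂, hact₂⟩ := h₂
  refine ⟨ι₁ ⊕ ι₂, inferInstance,
    (C₁.comap (LinearMap.funLeft F F Sum.inl)) ⊓ (C₂.comap (LinearMap.funLeft F F Sum.inr)),
    ?_, ?_⟩
  · intro c hc
    rw [Submodule.mem_inf, Submodule.mem_comap, Submodule.mem_comap] at hc
    rw [wt_sum]
    exact Nat.dvd_add (hdiv₁ _ hc.1) (hdiv₂ _ hc.2)
  · have hact : actF ((C₁.comap (LinearMap.funLeft F F Sum.inl))
        ⊓ (C₂.comap (LinearMap.funLeft F F Sum.inr)))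
        = (actF C₁).disjSum (actF C₂) := by
      ext s
      cases s with
      | inl i =>
        rw [Finset.inl_mem_disjSum]
        simp only [actF, mem_filter, mem_univ, true_and]
        constructor
        · rintro ⟨c, hc, hne⟩
          rw [Submodule.mem_inf, Submodule.mem_comap, Submodule.mem_comap] at hc
          exact ⟨LinearMap.funLeft F F Sum.inl c, hc.1, hne⟩
        · rintro ⟨c₁, hc₁, hne⟩
          refine ⟨Sum.elim c₁ 0, ?_, hne⟩
          rw [Submodule.mem_inf, Submodule.mem_comap, Submodule.mem_comap]
          constructor
          · have : LinearMap.funLeft F F Sum.inl (Sum.elim c₁ (0 : ι₂ → F)) = c₁ := rfl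
            rw [this]; exact hc₁
          · have : LinearMap.funLeft F F Sum.inr (Sum.elim c₁ (0 : ι₂ → F)) = 0 := rfl
            rw [this]; exact C₂.zero_mem
      | inr i =>
        rw [Finset.inr_mem_disjSum]
        simp only [actF, mem_filter, mem_univ, true_and]
        constructor
        · rintro ⟨c, hc, hne⟩
          rw [Submodule.mem_inf, Submodule.mem_comap, Submodule.mem_comap] at hc
          exact ⟨LinearMap.funLeft F F Sum.inr c, hc.2, hne⟩
        · rintro ⟨c₂, hc₂, hne⟩
          refine ⟨Sum.elim 0 c₂, ?_, hne⟩
          rw [Submodule.mem_inf, Submodule.mem_comap, Submodule.mem_comap]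
          constructor
          · have : LinearMap.funLeft F F Sum.inl (Sum.elim (0 : ι₁ → F) c₂) = 0 := rfl
            rw [this]; exact C₁.zero_mem
          · have : LinearMap.funLeft F F Sum.inr (Sum.elim (0 : ι₁ → F) c₂) = c₂ := rfl
            rw [this]; exact hc₂
    rw [hact, Finset.card_disjSum, hact₁, hact₂]

lemma goodI_zero : GoodI F 0 := by
  refine ⟨Fin 0, inferInstance, ⊤, ?_, ?_⟩
  · intro c _
    have : c = 0 := funext fun i => i.elim0
    rw [this, wt_zero]
    exact dvd_zero 8
  · rw [Finset.card_eq_zero]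
    apply Finset.eq_empty_of_forall_notMem
    intro i
    exact i.elim0

lemma goodI_rep (hF : Fintype.card F = 4) (x y z : ℕ) : GoodI F (8 * x + 10 * y + 21 * z) := by
  induction x with
  | zero =>
    induction y with
    | zero =>
      induction z with
      | zero => simpa using goodI_zero
      | succ z ihz =>
        have : 8 * 0 + 10 * 0 + 21 * (z + 1) = (8 * 0 + 10 * 0 + 21 * z) + 21 := by ring
        rw [this]
        exact goodI_add ihz (goodI_21 hF)
    | succ y ihy =>
      have : 8 * 0 + 10 * (y + 1) + 21 * z = (8 * 0 + 10 * y + 21 * z) + 10 := by ring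
      rw [this]
      exact goodI_add ihy (goodI_10 hF)
  | succ x ihx =>
    have : 8 * (x + 1) + 10 * y + 21 * z = (8 * x + 10 * y + 21 * z) + 8 := by ring
    rw [this]
    exact goodI_add ihx (goodI_8 hF)

/-- transport to `Fin m` -/
lemma good_of_goodI {n : ℕ} (h : GoodI F n) :
    ∃ (m : ℕ) (C : Submodule F (Fin m → F)),
      (∀ c ∈ C, 8 ∣ hammingNorm c) ∧ Nat.card {i : Fin m // ∃ c ∈ C, c i ≠ 0} = n := by
  classical
  obtain ⟨ι, _, C, hdiv, hact⟩ := h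
  set m := Fintype.card ι with hm
  set e : Fin m ≃ ι := (Fintype.equivFin ι).symm with he
  set L := LinearEquiv.funCongrLeft F F e with hL
  refine ⟨m, C.map (L : (ι → F) →ₗ[F] (Fin m → F)), ?_, ?_⟩
  · rintro c' ⟨c, hc, rfl⟩
    have hwte : wt ((L : (ι → F) →ₗ[F] (Fin m → F)) c) = wt c := by
      have : ((L : (ι → F) →ₗ[F] (Fin m → F)) c) = c ∘ e := rfl
      rw [this, wt_comp_equiv]
    rw [← wt_eq_hammingNorm, hwte]
    exact hdiv c hc
  · have hiff : ∀ j : Fin m,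
        (∃ c' ∈ C.map (L : (ι → F) →ₗ[F] (Fin m → F)), c' j ≠ 0)
          ↔ (∃ c ∈ C, c (e j) ≠ 0) := by
      intro j
      constructor
      · rintro ⟨c', ⟨c, hc, rfl⟩, hne⟩
        exact ⟨c, hc, hne⟩
      · rintro ⟨c, hc, hne⟩
        exact ⟨(L : (ι → F) →ₗ[F] (Fin m → F)) c, ⟨c, hc, rfl⟩, hne⟩
    rw [← hact, ← actCard_eq]
    apply Nat.card_congr
    exact Equiv.subtypeEquiv e (fun j => by rw [hiff j])

lemma goodI_of_good {n : ℕ} {m : ℕ} (C : Submodule F (Fin m → F))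
    (hdiv : ∀ c ∈ C, 8 ∣ hammingNorm c)
    (hact : Nat.card {i : Fin m // ∃ c ∈ C, c i ≠ 0} = n) : GoodI F n := by
  refine ⟨Fin m, inferInstance, C, ?_, ?_⟩
  · intro c hc
    rw [wt_eq_hammingNorm]
    exact hdiv c hc
  · rw [← actCard_eq]
    exact hact

lemma rep_of_not_bad : ∀ n : ℕ, 1 ≤ n →
    (¬ (n = 2 ∨ n = 4 ∨ n = 6 ∨ n = 12 ∨ n = 14 ∨ n = 22 ∨ n = 1 ∨ n = 3 ∨ n = 5 ∨ n = 7 ∨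
      n = 9 ∨ n = 11 ∨ n = 13 ∨ n = 15 ∨ n = 17 ∨ n = 19 ∨ n = 23 ∨ n = 25 ∨ n = 27 ∨
      n = 33 ∨ n = 35 ∨ n = 43)) →
    ∃ x y z : ℕ, n = 8 * x + 10 * y + 21 * z := by
  intro n
  induction n using Nat.strong_induction_on with
  | _ n ih =>
    intro h1 hb
    by_cases h52 : n < 52
    · interval_cases n
      · exact absurd (by omega) hb
      · exact absurd (by omega) hb
      · exact absurd (by omega) hb
      · exact absurd (by omega) hb
      · exact absurd (by omega) hb
      · exact absurd (by omega) hb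
      · exact absurd (by omega) hb
      · exact ⟨1, 0, 0, by norm_num⟩
      · exact absurd (by omega) hb
      · exact ⟨0, 1, 0, by norm_num⟩
      · exact absurd (by omega) hb
      · exact absurd (by omega) hb
      · exact absurd (by omega) hb
      · exact absurd (by omega) hb
      · exact absurd (by omega) hb
      · exact ⟨2, 0, 0, by norm_num⟩
      · exact absurd (by omega) hb
      · exact ⟨1, 1, 0, by norm_num⟩
      · exact absurd (by omega) hb
      · exact ⟨0, 2, 0, by norm_num⟩
      · exact ⟨0, 0, 1, by norm_num⟩
      · exact absurd (by omega) hb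
      · exact absurd (by omega) hb
      · exact ⟨3, 0, 0, by norm_num⟩
      · exact absurd (by omega) hb
      · exact ⟨2, 1, 0, by norm_num⟩
      · exact absurd (by omega) hb
      · exact ⟨1, 2, 0, by norm_num⟩
      · exact ⟨1, 0, 1, by norm_num⟩
      · exact ⟨0, 3, 0, by norm_num⟩
      · exact ⟨0, 1, 1, by norm_num⟩
      · exact ⟨4, 0, 0, by norm_num⟩
      · exact absurd (by omega) hb
      · exact ⟨3, 1, 0, by norm_num⟩
      · exact absurd (by omega) hb
      · exact ⟨2, 2, 0, by norm_num⟩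
      · exact ⟨2, 0, 1, by norm_num⟩
      · exact ⟨1, 3, 0, by norm_num⟩
      · exact ⟨1, 1, 1, by norm_num⟩
      · exact ⟨5, 0, 0, by norm_num⟩
      · exact ⟨0, 2, 1, by norm_num⟩
      · exact ⟨4, 1, 0, by norm_num⟩
      · exact absurd (by omega) hb
      · exact ⟨3, 2, 0, by norm_num⟩
      · exact ⟨3, 0, 1, by norm_num⟩
      · exact ⟨2, 3, 0, by norm_num⟩
      · exact ⟨2, 1, 1, by norm_num⟩
      · exact ⟨6, 0, 0, by norm_num⟩
      · exact ⟨1, 2, 1, by norm_num⟩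
      · exact ⟨5, 1, 0, by norm_num⟩
      · exact ⟨0, 3, 1, by norm_num⟩
    · obtain ⟨x, y, z, hx⟩ := ih (n - 8) (by omega) (by omega) (by omega)
      exact ⟨x + 1, y, z, by omega⟩

end Constr
end S18
end S18sec

/-- For `n ≥ 1`, an `8`-divisible linear code over `F_4` of effective
length `n` exists iff `n` avoids the listed exceptional set; equivalently, iff `n` is a
non-negative integer combination of `8`, `10`, and `21`. -/
theorem stmt_18 (hF : Fintype.card F = 4) (n : ℕ) (hn : 1 ≤ n) :
    ((∃ (m : ℕ) (C : Submodule F (Fin m → F)),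
        IsDivisibleCode F 8 C ∧ effLength F C = n) ↔
      n ∉ (({2, 4, 6, 12, 14, 22} ∪
        {1, 3, 5, 7, 9, 11, 13, 15, 17, 19, 23, 25, 27, 33, 35, 43}) : Set ℕ)) ∧
    ((∃ (m : ℕ) (C : Submodule F (Fin m → F)),
        IsDivisibleCode F 8 C ∧ effLength F C = n) ↔
      ∃ x y z : ℕ, n = 8 * x + 10 * y + 21 * z) := by
  have hGoodBad : (∃ (m : ℕ) (C : Submodule F (Fin m → F)),
      IsDivisibleCode F 8 C ∧ effLength F C = n) → ¬(n = 2 ∨ n = 4 ∨ n = 6 ∨ n = 12 ∨ n = 14 ∨ n = 22 ∨ n = 1 ∨ n = 3 ∨ n = 5 ∨ n = 7 ∨ n = 9 ∨ n = 11 ∨ n = 13 ∨ n = 15 ∨ n = 17 ∨ n = 19 ∨ n = 23 ∨ n = 25 ∨ n = 27 ∨ n = 33 ∨ n = 35 ∨ n = 43) := by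
    rintro ⟨m, C, hdiv, heff⟩ hb
    have hact : (S18.actF C).card = n := by
      rw [← S18.actCard_eq]
      exact heff
    exact S18.not_bad hF
      (fun c hc => by rw [S18.wt_eq_hammingNorm]; exact hdiv c hc)
      (by rw [hact]; exact hb)
  have hRepGood : (∃ x y z : ℕ, n = 8 * x + 10 * y + 21 * z) →
      (∃ (m : ℕ) (C : Submodule F (Fin m → F)),
        IsDivisibleCode F 8 C ∧ effLength F C = n) := by
    rintro ⟨x, y, z, rfl⟩
    obtain ⟨m, C, h1, h2⟩ := S18.good_of_goodI (S18.goodI_rep hF x y z)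
    exact ⟨m, C, h1, h2⟩
  have hmem_iff : (n ∉ (({2, 4, 6, 12, 14, 22} ∪
      {1, 3, 5, 7, 9, 11, 13, 15, 17, 19, 23, 25, 27, 33, 35, 43}) : Set ℕ))
      ↔ ¬(n = 2 ∨ n = 4 ∨ n = 6 ∨ n = 12 ∨ n = 14 ∨ n = 22 ∨ n = 1 ∨ n = 3 ∨ n = 5 ∨ n = 7 ∨ n = 9 ∨ n = 11 ∨ n = 13 ∨ n = 15 ∨ n = 17 ∨ n = 19 ∨ n = 23 ∨ n = 25 ∨ n = 27 ∨ n = 33 ∨ n = 35 ∨ n = 43) := by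
    simp only [Set.mem_union, Set.mem_insert_iff, Set.mem_singleton_iff]
    constructor <;> (intro h; omega)
  constructor
  · constructor
    · intro hG
      rw [hmem_iff]
      exact hGoodBad hG
    · intro hmem
      exact hRepGood (S18.rep_of_not_bad n hn (hmem_iff.1 hmem))
  · constructor
    · intro hG
      exact S18.rep_of_not_bad n hn (hGoodBad hG)
    · exact hRepGood


end
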